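/- The k-module EQSym[m] of multi-quasisymmetric functions with semigroup exponents E is a Hopf algebra, with coproduct Δ(M_w) = sum_{i=0}^n M_{(w_1,...,w_i)} ⊗ M_{(w_{i+1},...,w_n)}, counit ε(M_w) = δ_{w,∅}, and antipode S(M_w) = (−1)^{ℓ(w)} sum_{L ⊨ ℓ(w)} M_{L∘w^r}. -/

import Mathlib

open scoped Classical

/-- The quasi-shuffle product of two words over an alphabet `C` with a binary
operation `op`, with values in the free `k`-module on words. -/
noncomputable def qsh {k : Type*} [CommRing k] {C : Type*} (op : C → C → C) :
    List C → List C → (List C →₀ k)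
  | [], y => Finsupp.single y 1
  | x, [] => Finsupp.single x 1
  | a :: x, b :: y =>
      (qsh op x (b :: y)).mapDomain (a :: ·) + (qsh op (a :: x) y).mapDomain (b :: ·) +
        (qsh op x y).mapDomain (op a b :: ·)
  termination_by x y => x.length + y.length
  decreasing_by all_goals simp [List.length_cons] <;> omega

/-- The quasi-shuffle product extended bilinearly to the free module on words,
the product of `EQSym[m]` in the basis `{M_w}`. -/
noncomputable def mulW {k : Type*} [CommRing k] {C : Type*} (op : C → C → C)
    (f g : List C →₀ k) : List C →₀ k :=
  f.sum fun x cx => g.sum fun y cy => (cx * cy) • qsh op x y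

/-- The deconcatenation coproduct on a basis word, with values in the free
module on pairs of words (realizing `EQSym ⊗ EQSym` in the basis
`{M_{w'} ⊗ M_{w''}}`):  `Δ(M_w) = ∑_{i=0}^{n} M_{(w_1,…,w_i)} ⊗ M_{(w_{i+1},…,w_n)}`. -/
noncomputable def deconc {k : Type*} [CommRing k] {C : Type*} (x : List C) :
    (List C × List C) →₀ k :=
  ∑ i ∈ Finset.range (x.length + 1), Finsupp.single (x.take i, x.drop i) 1

/-- The counit `ε(M_w) = δ_{w,∅}`. -/
noncomputable def counitW {k : Type*} [CommRing k] {C : Type*} (x : List C) : k :=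
  if x = [] then 1 else 0

/-- The elementary tensor of two elements of the free module on words, inside
the free module on pairs of words. -/
noncomputable def tensorPair {k : Type*} [CommRing k] {C : Type*}
    (f g : List C →₀ k) : (List C × List C) →₀ k :=
  f.sum fun x cx => g.sum fun y cy => Finsupp.single (x, y) (cx * cy)

/-- The componentwise quasi-shuffle product on the free module on pairs of
words (the product of `EQSym ⊗ EQSym`). -/
noncomputable def mulPair {k : Type*} [CommRing k] {C : Type*} (op : C → C → C)
    (F G : (List C × List C) →₀ k) : (List C × List C) →₀ k :=
  F.sum fun p cp => G.sum fun q cq =>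
    (cp * cq) • tensorPair (qsh op p.1 q.1) (qsh op p.2 q.2)

/-- Compositions of `n`: lists of positive integers with sum `n`. -/
def Comps (n : ℕ) : Set (List ℕ) := {L | (∀ l ∈ L, 0 < l) ∧ L.sum = n}

/-- `L ∘ 𝐛`: merge consecutive blocks of `𝐛` of sizes given by `L`, combining
the entries of each block with `op` (with neutral element `z`). -/
def blocksOf {C : Type*} (op : C → C → C) (z : C) : List ℕ → List C → List C
  | [], _ => []
  | l :: L, b => ((b.take l).foldr op z) :: blocksOf op z L (b.drop l)

/-- The antipode on a basis word:
`S(M_w) = (−1)^{ℓ(w)} ∑_{L ⊨ ℓ(w)} M_{L ∘ w^r}`. -/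
noncomputable def antipodeW {k : Type*} [CommRing k] {C : Type*}
    (op : C → C → C) (z : C) (x : List C) : List C →₀ k :=
  ((-1 : ℤ) ^ x.length) •
    ∑ᶠ L ∈ Comps x.length, Finsupp.single (blocksOf op z L x.reverse) (1 : k)

section Part3
variable {k : Type*} [CommRing k] {C : Type*} (op : C → C → C)

lemma qsh_nil_left (y : List C) : qsh (k := k) op [] y = Finsupp.single y 1 := by rw [qsh]

lemma qsh_nil_right (x : List C) : qsh (k := k) op x [] = Finsupp.single x 1 := by
  cases x <;> simp [qsh]

lemma qsh_cons_cons (a b : C) (x y : List C) :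
    qsh (k := k) op (a :: x) (b :: y) =
      (qsh op x (b :: y)).mapDomain (a :: ·) + (qsh op (a :: x) y).mapDomain (b :: ·) +
        (qsh op x y).mapDomain (op a b :: ·) := by rw [qsh]

lemma deconc_sum {M : Type*} [AddCommMonoid M] [Module k M] (x : List C)
    (F : List C × List C → M) :
    ((deconc (k := k) x).sum fun p cp => cp • F p) =
      ∑ i ∈ Finset.range (x.length + 1), F (x.take i, x.drop i) := by
  rw [deconc, ← Finsupp.sum_finset_sum_index (fun p => by simp) (fun p b c => by rw [add_smul])]
  refine Finset.sum_congr rfl fun i _ => ?_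
  rw [Finsupp.sum_single_index (by simp), one_smul]

/-- mapDomain of a finset sum. -/
lemma mapDomain_fsum {ι α β : Type*} (s : Finset ι) (h : α → β) (F : ι → α →₀ k) :
    Finsupp.mapDomain h (∑ i ∈ s, F i) = ∑ i ∈ s, Finsupp.mapDomain h (F i) :=
  map_sum (Finsupp.mapDomain.addMonoidHom h) F s

/-- Dl: the coproduct extended linearly. -/
noncomputable def DlD (f : List C →₀ k) : (List C × List C) →₀ k :=
  f.sum fun z c => c • deconc z

lemma DlD_single (z : List C) (c : k) :
    DlD (Finsupp.single z c) = c • deconc (k := k) z := by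
  rw [DlD, Finsupp.sum_single_index (by rw [zero_smul])]

lemma DlD_add (f g : List C →₀ k) : DlD (f + g) = DlD f + DlD g := by
  rw [DlD, DlD, DlD, Finsupp.sum_add_index' (fun z => by rw [zero_smul])
    (fun z b c => by rw [add_smul])]

lemma deconc_cons (c : C) (z : List C) :
    deconc (k := k) (c :: z) = Finsupp.single (([] : List C), c :: z) 1 +
      Finsupp.mapDomain (fun p => (c :: p.1, p.2)) (deconc z) := by
  rw [deconc, deconc, List.length_cons, Finset.sum_range_succ']
  rw [mapDomain_fsum, add_comm]
  congr 1
  refine Finset.sum_congr rfl fun i _ => ?_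
  rw [Finsupp.mapDomain_single]
  rfl

lemma DlD_mapDomain_cons' (c : C) (f : List C →₀ k) :
    DlD (Finsupp.mapDomain (c :: ·) f) =
      Finsupp.mapDomain (fun z => (([] : List C), c :: z)) f +
        Finsupp.mapDomain (fun p => (c :: p.1, p.2)) (DlD f) := by
  rw [DlD, Finsupp.sum_mapDomain_index (fun z => by rw [zero_smul])
    (fun z b c => by rw [add_smul])]
  rw [Finsupp.sum]
  have key : ∀ z ∈ f.support, f z • deconc (k := k) (c :: z) =
      Finsupp.single (([] : List C), c :: z) (f z) +
        Finsupp.mapDomain (fun p => (c :: p.1, p.2)) (f z • deconc z) := by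
    intro z _
    rw [deconc_cons, smul_add, Finsupp.smul_single, smul_eq_mul, mul_one,
      Finsupp.mapDomain_smul]
  rw [Finset.sum_congr rfl key, Finset.sum_add_distrib]
  congr 1
  rw [DlD, Finsupp.sum, mapDomain_fsum]

lemma tensorPair_single_single (x y : List C) (c d : k) :
    tensorPair (Finsupp.single x c) (Finsupp.single y d) = Finsupp.single (x, y) (c * d) := by
  rw [tensorPair, Finsupp.sum_single_index (by simp), Finsupp.sum_single_index (by simp)]

lemma tensorPair_nil_left (g : List C →₀ k) :
    tensorPair (Finsupp.single ([] : List C) 1) g =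
      Finsupp.mapDomain (fun z => (([] : List C), z)) g := by
  rw [tensorPair, Finsupp.sum_single_index (by simp), Finsupp.mapDomain]
  refine Finsupp.sum_congr fun y _ => ?_
  rw [one_mul]

lemma tensorPair_mapDomain_left (a : C) (f g : List C →₀ k) :
    tensorPair (Finsupp.mapDomain (a :: ·) f) g =
      Finsupp.mapDomain (fun p => (a :: p.1, p.2)) (tensorPair f g) := by
  rw [tensorPair, Finsupp.sum_mapDomain_index (fun x => by simp)
    (fun x b c => by
      simp only [add_mul]
      rw [← Finsupp.sum_add]
      refine Finsupp.sum_congr fun y _ => ?_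
      rw [Finsupp.single_add])]
  rw [tensorPair,
    show Finsupp.mapDomain (α := List C × List C) (M := k) (fun p => (a :: p.1, p.2)) =
      ⇑(Finsupp.mapDomain.addMonoidHom (fun p => (a :: p.1, p.2))) from rfl,
    map_finsuppSum]
  refine Finsupp.sum_congr fun x _ => ?_
  rw [map_finsuppSum]
  refine Finsupp.sum_congr fun y _ => ?_
  rw [Finsupp.mapDomain.addMonoidHom_apply, Finsupp.mapDomain_single]

lemma DlD_mapDomain_cons (c : C) (f : List C →₀ k) :
    DlD (Finsupp.mapDomain (c :: ·) f) =
      Finsupp.mapDomain (fun z => (([] : List C), z)) (Finsupp.mapDomain (c :: ·) f) +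
        Finsupp.mapDomain (fun p => (c :: p.1, p.2)) (DlD f) := by
  rw [DlD_mapDomain_cons', ← Finsupp.mapDomain_comp]
  rfl

lemma tensorPair_add_left (f g h : List C →₀ k) :
    tensorPair (f + g) h = tensorPair f h + tensorPair g h := by
  rw [tensorPair, tensorPair, tensorPair,
    Finsupp.sum_add_index' (fun x => by simp) (fun x b c => by
      simp only [add_mul]
      rw [← Finsupp.sum_add]
      refine Finsupp.sum_congr fun y _ => ?_
      rw [Finsupp.single_add])]

lemma tensorPair_add_right (f g h : List C →₀ k) :
    tensorPair f (g + h) = tensorPair f g + tensorPair f h := by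
  rw [tensorPair, tensorPair, tensorPair, ← Finsupp.sum_add]
  refine Finsupp.sum_congr fun x _ => ?_
  rw [Finsupp.sum_add_index' (fun y => by simp) (fun y b c => by
    rw [mul_add, Finsupp.single_add])]

lemma tensorPair_single_cons (c : C) (u : List C) (g : List C →₀ k) :
    tensorPair (Finsupp.single (c :: u) (1 : k)) g =
      Finsupp.mapDomain (fun p => (c :: p.1, p.2)) (tensorPair (Finsupp.single u 1) g) := by
  rw [← tensorPair_mapDomain_left, Finsupp.mapDomain_single]

lemma Dl_qsh : ∀ n (x y : List C), x.length + y.length ≤ n →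
    DlD (qsh (k := k) op x y) =
      ∑ i ∈ Finset.range (x.length + 1), ∑ j ∈ Finset.range (y.length + 1),
        tensorPair (qsh op (x.take i) (y.take j)) (qsh op (x.drop i) (y.drop j)) := by
  intro n
  induction n with
  | zero =>
    intro x y h
    have hx : x = [] := by cases x <;> simp_all
    have hy : y = [] := by cases y <;> simp_all
    subst hx; subst hy
    simp [qsh_nil_left, DlD_single, deconc, tensorPair_single_single]
  | succ n ih =>
    intro x y hlen
    match x, y with
    | [], y =>
      rw [qsh_nil_left, DlD_single, one_smul]
      simp only [List.length_nil, Nat.zero_add, Finset.sum_range_one, List.take_zero,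
        List.drop_zero, List.take_nil, List.drop_nil]
      rw [deconc]
      refine Finset.sum_congr rfl fun j _ => ?_
      rw [qsh_nil_left, qsh_nil_left, tensorPair_single_single, one_mul]
    | a :: x, [] =>
      rw [qsh_nil_right, DlD_single, one_smul]
      simp only [List.length_nil, Finset.sum_range_one, List.take_zero, List.drop_zero,
        List.take_nil, List.drop_nil, Nat.add_zero]
      rw [deconc]
      refine Finset.sum_congr rfl fun i _ => ?_
      rw [qsh_nil_right, qsh_nil_right, tensorPair_single_single, one_mul]
      simp
    | a :: x, b :: y =>
      have hx : x.length + (b :: y).length ≤ n := by simp at hlen ⊢; omega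
      have hy : (a :: x).length + y.length ≤ n := by simp at hlen ⊢; omega
      have hxy : x.length + y.length ≤ n := by simp at hlen ⊢; omega
      rw [qsh_cons_cons, DlD_add, DlD_add, DlD_mapDomain_cons, DlD_mapDomain_cons,
        DlD_mapDomain_cons, ih x (b :: y) hx, ih (a :: x) y hy, ih x y hxy]
      simp only [List.length_cons, Finset.sum_range_succ', List.take_succ_cons,
        List.drop_succ_cons, List.take_zero, List.drop_zero, qsh_cons_cons, qsh_nil_left,
        qsh_nil_right, tensorPair_add_left, tensorPair_add_right, tensorPair_mapDomain_left,
        tensorPair_single_cons, tensorPair_nil_left, Finsupp.mapDomain_add, mapDomain_fsum,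
        Finset.sum_add_distrib]
      abel

lemma counit_sum (f : List C →₀ k) :
    (f.sum fun z c => c * counitW (k := k) z) = f [] := by
  have : (f.sum fun z c => c * counitW (k := k) z) =
      f.sum fun z c => if z = ([] : List C) then (fun (_ : List C) (c : k) => c) z c else 0 := by
    refine Finsupp.sum_congr fun z _ => ?_
    rw [counitW]
    split <;> simp
  rw [this, Finsupp.sum_ite_eq']
  split
  · rfl
  · next h => rw [Finsupp.notMem_support_iff.1 h]

lemma qsh_apply_nil (x y : List C) (h : x ≠ [] ∨ y ≠ []) : (qsh (k := k) op x y) [] = 0 := by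
  match x, y with
  | [], y =>
    rw [qsh_nil_left]
    have hy : y ≠ [] := by tauto
    rw [Finsupp.single_apply_eq_zero.2 (fun hh => absurd hh.symm hy)]
  | a :: x, [] =>
    rw [qsh_nil_right]
    simp
  | a :: x, b :: y =>
    rw [qsh_cons_cons]
    have h1 : ∀ (c : C) (f : List C →₀ k), (Finsupp.mapDomain (c :: ·) f) [] = 0 := by
      intro c f
      refine Finsupp.mapDomain_notin_range _ _ ?_
      rintro ⟨z, hz⟩
      exact List.cons_ne_nil c z hz
    simp [h1]

lemma counit_mult (x y : List C) :
    ((qsh (k := k) op x y).sum fun z cz => cz * counitW (k := k) z) =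
      counitW (k := k) x * counitW (k := k) y := by
  rw [counit_sum]
  by_cases hx : x = []
  · by_cases hy : y = []
    · subst hx; subst hy
      rw [qsh_nil_left]
      simp [counitW]
    · subst hx
      rw [qsh_apply_nil op _ _ (Or.inr hy)]
      simp [counitW, hy]
  · rw [qsh_apply_nil op _ _ (Or.inl hx)]
    simp [counitW, hx]

lemma mulPair_deconc (x y : List C) :
    mulPair op (deconc (k := k) x) (deconc (k := k) y) =
      ∑ i ∈ Finset.range (x.length + 1), ∑ j ∈ Finset.range (y.length + 1),
        tensorPair (qsh op (x.take i) (y.take j)) (qsh op (x.drop i) (y.drop j)) := by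
  rw [mulPair]
  have e : ((deconc (k := k) x).sum fun p cp => (deconc (k := k) y).sum fun q cq =>
      (cp * cq) • tensorPair (qsh (k := k) op p.1 q.1) (qsh (k := k) op p.2 q.2)) =
      ((deconc (k := k) x).sum fun p cp => cp • ((deconc (k := k) y).sum fun q cq =>
        cq • tensorPair (qsh (k := k) op p.1 q.1) (qsh (k := k) op p.2 q.2))) := by
    refine Finsupp.sum_congr fun p _ => ?_
    rw [Finsupp.smul_sum]
    refine Finsupp.sum_congr fun q _ => ?_
    rw [mul_smul]
  rw [e, deconc_sum]
  refine Finset.sum_congr rfl fun i _ => ?_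
  rw [deconc_sum (k := k) y (fun q => tensorPair (qsh op (x.take i) q.1) (qsh op (x.drop i) q.2))]

lemma part3 (x y : List C) :
    (((qsh (k := k) op x y).sum fun z cz => cz • deconc (k := k) z :
        (List C × List C) →₀ k)) =
        mulPair op (deconc (k := k) x) (deconc (k := k) y) ∧
      ((qsh (k := k) op x y).sum fun z cz => cz * counitW (k := k) z) =
        counitW (k := k) x * counitW (k := k) y := by
  constructor
  · rw [mulPair_deconc]
    exact Dl_qsh op (x.length + y.length) x y le_rfl
  · exact counit_mult op x y

end Part3

section Part4A
/-- The finset of compositions of `n`. -/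
def compsF : ℕ → Finset (List ℕ)
  | 0 => {[]}
  | n + 1 => (Finset.range (n + 1)).attach.biUnion
      fun j => (compsF j.1).image (fun L => (n + 1 - j.1) :: L)
  decreasing_by exact Finset.mem_range.1 j.2

lemma mem_compsF : ∀ n (L : List ℕ), L ∈ compsF n ↔ (∀ l ∈ L, 0 < l) ∧ L.sum = n := by
  intro n
  induction n using Nat.strong_induction_on with
  | _ n ih =>
    intro L
    match n with
    | 0 =>
      rw [compsF]
      simp only [Finset.mem_singleton]
      constructor
      · rintro rfl; simp
      · rintro ⟨h1, h2⟩
        cases L with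
        | nil => rfl
        | cons l L' =>
          exfalso
          have := h1 l (by simp)
          simp at h2
          omega
    | n + 1 =>
      rw [compsF]
      simp only [Finset.mem_biUnion, Finset.mem_attach, Finset.mem_image, true_and,
        Subtype.exists]
      constructor
      · rintro ⟨j, hj, L', hL', rfl⟩
        have hj' := Finset.mem_range.1 hj
        obtain ⟨h1, h2⟩ := (ih j hj' L').1 hL'
        refine ⟨?_, ?_⟩
        · intro l hl
          rcases List.mem_cons.1 hl with rfl | hl
          · omega
          · exact h1 l hl
        · simp [h2]; omega
      · rintro ⟨h1, h2⟩
        cases L with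
        | nil => simp at h2
        | cons l L' =>
          have hl : 0 < l := h1 l (by simp)
          have hsum : l + L'.sum = n + 1 := by simpa using h2
          refine ⟨L'.sum, Finset.mem_range.2 (by omega), L', ?_, ?_⟩
          · exact (ih L'.sum (by omega) L').2 ⟨fun x hx => h1 x (by simp [hx]), rfl⟩
          · congr 1
            omega

lemma comps_eq_compsF (n : ℕ) : Comps n = ↑(compsF n) := by
  ext L
  rw [Finset.mem_coe, mem_compsF]
  rfl

lemma compsF_sum_succ {M : Type*} [AddCommMonoid M] (n : ℕ) (F : List ℕ → M) :
    ∑ L ∈ compsF (n + 1), F L =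
      ∑ j ∈ Finset.range (n + 1), ∑ L ∈ compsF j, F ((n + 1 - j) :: L) := by
  rw [compsF]
  rw [Finset.sum_biUnion]
  · rw [← Finset.sum_attach (Finset.range (n + 1))
      (fun j => ∑ L ∈ compsF j, F ((n + 1 - j) :: L))]
    refine Finset.sum_congr rfl fun j _ => ?_
    rw [Finset.sum_image]
    intro L1 _ L2 _ h
    exact (List.cons_injective h)
  · rintro ⟨j1, hj1⟩ - ⟨j2, hj2⟩ - hne
    have hj1' := Finset.mem_range.1 hj1
    have hj2' := Finset.mem_range.1 hj2
    simp only [Finset.disjoint_left, Finset.mem_image]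
    rintro L ⟨L1, hL1, rfl⟩ ⟨L2, hL2, hEq⟩
    have hhead : n + 1 - j1 = n + 1 - j2 := by
      exact (List.cons_eq_cons.1 hEq).1.symm
    have : j1 = j2 := by omega
    exact hne (by simp [this])

end Part4A

section Part4B
variable {k : Type*} [CommRing k] {C : Type*} (op : C → C → C) (z : C)

lemma mulW_single_right (f : List C →₀ k) (v : List C) :
    mulW op f (Finsupp.single v (1 : k)) = f.sum fun x cx => cx • qsh op x v := by
  rw [mulW]
  refine Finsupp.sum_congr fun x _ => ?_
  rw [Finsupp.sum_single_index (by simp), mul_one]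

lemma mulW_nil_right (f : List C →₀ k) :
    mulW op f (Finsupp.single ([] : List C) (1 : k)) = f := by
  rw [mulW_single_right]
  have : (f.sum fun x cx => cx • qsh (k := k) op x []) = f.sum Finsupp.single := by
    refine Finsupp.sum_congr fun x _ => ?_
    rw [qsh_nil_right, Finsupp.smul_single, smul_eq_mul, mul_one]
  rw [this, Finsupp.sum_single]

lemma mulW_nil_left (f : List C →₀ k) :
    mulW op (Finsupp.single ([] : List C) (1 : k)) f = f := by
  rw [mulW, Finsupp.sum_single_index (by simp)]
  have : (f.sum fun y cy => ((1 : k) * cy) • qsh (k := k) op [] y) = f.sum Finsupp.single := by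
    refine Finsupp.sum_congr fun y _ => ?_
    rw [qsh_nil_left, one_mul, Finsupp.smul_single, smul_eq_mul, mul_one]
  rw [this, Finsupp.sum_single]

lemma mulW_zero_left (g : List C →₀ k) : mulW op 0 g = 0 := by
  rw [mulW, Finsupp.sum_zero_index]

lemma mulW_add_left (f g h : List C →₀ k) :
    mulW op (f + g) h = mulW op f h + mulW op g h := by
  rw [mulW, mulW, mulW, Finsupp.sum_add_index' (fun x => by simp)
    (fun x b c => by
      simp only [add_mul, add_smul]
      rw [← Finsupp.sum_add])]

lemma mulW_smul_left (c : k) (f g : List C →₀ k) :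
    mulW op (c • f) g = c • mulW op f g := by
  rw [mulW, mulW, Finsupp.sum_smul_index (fun x => by simp), Finsupp.smul_sum]
  refine Finsupp.sum_congr fun x _ => ?_
  rw [Finsupp.smul_sum]
  refine Finsupp.sum_congr fun y _ => ?_
  rw [mul_assoc, mul_smul]

lemma mulW_sum_left {ι : Type*} (s : Finset ι) (F : ι → List C →₀ k) (g : List C →₀ k) :
    mulW op (∑ i ∈ s, F i) g = ∑ i ∈ s, mulW op (F i) g := by
  classical
  induction s using Finset.induction_on with
  | empty => simp [mulW_zero_left]
  | insert _ _ hni ih =>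
    rw [Finset.sum_insert hni, Finset.sum_insert hni, mulW_add_left, ih]

lemma mulW_mapDomain_smul (h : List C → List C) (c : k) (f : List C →₀ k) :
    Finsupp.mapDomain h (c • f) = c • Finsupp.mapDomain h f :=
  Finsupp.mapDomain_smul c f

/-- the three-term recursion for products against a single, left factor a cons mapDomain. -/
lemma mulW_mapDomain_cons (a b : C) (f : List C →₀ k) (v : List C) :
    mulW op (Finsupp.mapDomain (a :: ·) f) (Finsupp.single (b :: v) 1) =
      Finsupp.mapDomain (a :: ·) (mulW op f (Finsupp.single (b :: v) 1)) +
        Finsupp.mapDomain (b :: ·) (mulW op (Finsupp.mapDomain (a :: ·) f)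
          (Finsupp.single v 1)) +
        Finsupp.mapDomain (op a b :: ·) (mulW op f (Finsupp.single v 1)) := by
  rw [mulW_single_right, mulW_single_right, mulW_single_right, mulW_single_right]
  rw [Finsupp.sum_mapDomain_index (fun x => by rw [zero_smul])
    (fun x b c => by rw [add_smul]), Finsupp.sum_mapDomain_index (fun x => by rw [zero_smul])
    (fun x b c => by rw [add_smul])]
  have key : ∀ x ∈ f.support, f x • qsh (k := k) op (a :: x) (b :: v) =
      Finsupp.mapDomain (a :: ·) (f x • qsh op x (b :: v)) +
        Finsupp.mapDomain (b :: ·) (f x • qsh op (a :: x) v) +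
        Finsupp.mapDomain (op a b :: ·) (f x • qsh op x v) := by
    intro x _
    rw [qsh_cons_cons, Finsupp.mapDomain_smul, Finsupp.mapDomain_smul, Finsupp.mapDomain_smul,
      ← smul_add, ← smul_add]
  rw [Finsupp.sum, Finset.sum_congr rfl key, Finset.sum_add_distrib, Finset.sum_add_distrib]
  rw [Finsupp.sum, Finsupp.sum, Finsupp.sum, mapDomain_fsum, mapDomain_fsum, mapDomain_fsum]

/-- `Σ(u) = ∑_{L ⊨ |u|} M_{L∘u}`. -/
noncomputable def SgF (u : List C) : List C →₀ k :=
  ∑ L ∈ compsF u.length, Finsupp.single (blocksOf op z L u) 1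

lemma SgF_nil : SgF (k := k) op z [] = Finsupp.single [] 1 := by
  rw [SgF, List.length_nil, compsF]
  simp [blocksOf]

lemma SgF_rec (u : List C) (n : ℕ) (hu : u.length = n + 1) :
    SgF (k := k) op z u = ∑ j ∈ Finset.range (n + 1),
      Finsupp.mapDomain ((u.take (n + 1 - j)).foldr op z :: ·)
        (SgF op z (u.drop (n + 1 - j))) := by
  rw [SgF, hu, compsF_sum_succ]
  refine Finset.sum_congr rfl fun j hj => ?_
  have hj' := Finset.mem_range.1 hj
  have hlen : (u.drop (n + 1 - j)).length = j := by
    rw [List.length_drop, hu]; omega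
  rw [SgF, hlen, mapDomain_fsum]
  refine Finset.sum_congr rfl fun L _ => ?_
  rw [Finsupp.mapDomain_single]
  rfl

end Part4B

section Part4C
variable {k : Type*} [CommRing k] {C : Type*} [AddCommMonoid C]

lemma antipodeW_eq (x : List C) :
    antipodeW (k := k) (· + ·) 0 x = ((-1 : k) ^ x.length) • SgF (· + ·) 0 x.reverse := by
  rw [antipodeW, comps_eq_compsF, finsum_mem_coe_finset, ← Int.cast_smul_eq_zsmul k, SgF,
    List.length_reverse]
  norm_num

lemma antipodeW_nil : antipodeW (k := k) ((· + ·) : C → C → C) 0 [] = Finsupp.single [] 1 := by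
  rw [antipodeW_eq]
  simp [SgF_nil]

/-- block sum of `w_{j+1} … w_i` (in reversed order). -/
def cb (w : List C) (j i : ℕ) : C := (((w.take i).reverse).take (i - j)).foldr (· + ·) 0

/-- `Σ((w_1…w_j)^r)`. -/
noncomputable def Chw (w : List C) (j : ℕ) : List C →₀ k := SgF (· + ·) 0 ((w.take j).reverse)

lemma Chw_zero (w : List C) : Chw (k := k) w 0 = Finsupp.single [] 1 := by
  rw [Chw, List.take_zero, List.reverse_nil, SgF_nil]

lemma antipode_take (w : List C) (p : ℕ) (hp : p ≤ w.length) :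
    antipodeW (k := k) (· + ·) 0 (w.take p) = ((-1 : k) ^ p) • Chw w p := by
  rw [antipodeW_eq, Chw, List.length_take, Nat.min_eq_left hp]

lemma Ch_rec (w : List C) (i : ℕ) (hi : i + 1 ≤ w.length) :
    Chw (k := k) w (i + 1) = ∑ j ∈ Finset.range (i + 1),
      Finsupp.mapDomain (cb w j (i + 1) :: ·) (Chw w j) := by
  have hlen : ((w.take (i + 1)).reverse).length = i + 1 := by
    rw [List.length_reverse, List.length_take]; omega
  rw [Chw, SgF_rec _ _ _ i hlen]
  refine Finset.sum_congr rfl fun j hj => ?_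
  have hj' := Finset.mem_range.1 hj
  have hdrop : ((w.take (i + 1)).reverse).drop (i + 1 - j) = (w.take j).reverse := by
    rw [List.drop_reverse]
    congr 1
    rw [List.length_take, Nat.min_eq_left hi, show i + 1 - (i + 1 - j) = j by omega,
      List.take_take, Nat.min_eq_left (by omega)]
  rw [hdrop]
  rfl

lemma take_rev_succ (w : List C) (i : ℕ) (h : i < w.length) :
    (w.take (i + 1)).reverse = w[i] :: (w.take i).reverse := by
  rw [List.take_succ, List.getElem?_eq_getElem h]
  simp

lemma cb_succ (w : List C) (i j : ℕ) (hij : j ≤ i) (hi : i < w.length) :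
    cb w j (i + 1) = w[i] + cb w j i := by
  rw [cb, cb, take_rev_succ w i hi, show i + 1 - j = (i - j) + 1 by omega,
    List.take_succ_cons, List.foldr_cons]

lemma cb_last (w : List C) (i : ℕ) (hi : i < w.length) :
    cb w i (i + 1) = w[i] := by
  rw [cb_succ w i i le_rfl hi, cb, Nat.sub_self, List.take_zero, List.foldr_nil, add_zero]

lemma star (w : List C) : ∀ i, i < w.length →
    (∑ p ∈ Finset.range (i + 1),
      mulW (· + ·) (antipodeW (k := k) (· + ·) 0 (w.take p)) (Finsupp.single (w.drop p) 1)) =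
    ((-1 : k) ^ i) • ∑ j ∈ Finset.range (i + 1),
      Finsupp.mapDomain (cb w j (i + 1) :: ·)
        (mulW (· + ·) (Chw w j) (Finsupp.single (w.drop (i + 1)) 1)) := by
  intro i
  induction i with
  | zero =>
    intro h
    rw [Finset.sum_range_one, Finset.sum_range_one, List.take_zero, List.drop_zero,
      antipodeW_nil, mulW_nil_left, Chw_zero, mulW_nil_left, Finsupp.mapDomain_single,
      pow_zero, one_smul, cb_last w 0 h, ← List.drop_eq_getElem_cons h, List.drop_zero]
  | succ i ih =>
    intro h
    have hi : i < w.length := by omega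
    rw [Finset.sum_range_succ, ih hi, antipode_take w (i + 1) (by omega), mulW_smul_left,
      Ch_rec w i (by omega), mulW_sum_left]
    have hdrop : w.drop (i + 1) = w[i + 1] :: w.drop (i + 2) := List.drop_eq_getElem_cons h
    rw [hdrop]
    have hexp : ∀ j ∈ Finset.range (i + 1),
        mulW (· + ·) (Finsupp.mapDomain (cb w j (i + 1) :: ·) (Chw (k := k) w j))
          (Finsupp.single (w[i + 1] :: w.drop (i + 2)) 1) =
        (Finsupp.mapDomain (cb w j (i + 1) :: ·)
            (mulW (· + ·) (Chw w j) (Finsupp.single (w[i + 1] :: w.drop (i + 2)) 1)) +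
          Finsupp.mapDomain (w[i + 1] :: ·)
            (mulW (· + ·) (Finsupp.mapDomain (cb w j (i + 1) :: ·) (Chw w j))
              (Finsupp.single (w.drop (i + 2)) 1))) +
          Finsupp.mapDomain (cb w j (i + 2) :: ·)
            (mulW (· + ·) (Chw w j) (Finsupp.single (w.drop (i + 2)) 1)) := by
      intro j hj
      have hj' := Finset.mem_range.1 hj
      rw [mulW_mapDomain_cons]
      have : cb w j (i + 1) + w[i + 1] = cb w j (i + 2) := by
        rw [cb_succ w (i + 1) j (by omega) h, add_comm]
      rw [this]
    rw [Finset.sum_congr rfl hexp, Finset.sum_add_distrib, Finset.sum_add_distrib]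
    -- regroup the middle sum as the new `j = i+1` term
    have hmid : (∑ j ∈ Finset.range (i + 1), Finsupp.mapDomain (w[i + 1] :: ·)
        (mulW (· + ·) (Finsupp.mapDomain (cb w j (i + 1) :: ·) (Chw (k := k) w j))
          (Finsupp.single (w.drop (i + 2)) 1))) =
        Finsupp.mapDomain (cb w (i + 1) (i + 2) :: ·)
          (mulW (· + ·) (Chw w (i + 1)) (Finsupp.single (w.drop (i + 2)) 1)) := by
      rw [cb_last w (i + 1) h, Ch_rec w i (by omega), mulW_sum_left, mapDomain_fsum]
    rw [hmid]
    rw [Finset.sum_range_succ (fun j => Finsupp.mapDomain (cb w j (i + 2) :: ·)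
      (mulW (· + ·) (Chw (k := k) w j) (Finsupp.single (w.drop (i + 2)) 1))) (i + 1)]
    set S1 := ∑ j ∈ Finset.range (i + 1), Finsupp.mapDomain (cb w j (i + 1) :: ·)
      (mulW (· + ·) (Chw (k := k) w j) (Finsupp.single (w[i + 1] :: w.drop (i + 2)) 1))
    set S2 := Finsupp.mapDomain (cb w (i + 1) (i + 2) :: ·)
      (mulW (· + ·) (Chw (k := k) w (i + 1)) (Finsupp.single (w.drop (i + 2)) 1))
    set S3 := ∑ j ∈ Finset.range (i + 1), Finsupp.mapDomain (cb w j (i + 2) :: ·)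
      (mulW (· + ·) (Chw (k := k) w j) (Finsupp.single (w.drop (i + 2)) 1))
    module
  termination_by i => i

lemma left_antipode (w : List C) :
    (∑ i ∈ Finset.range (w.length + 1),
      mulW (· + ·) (antipodeW (k := k) (· + ·) 0 (w.take i)) (Finsupp.single (w.drop i) 1)) =
    counitW (k := k) w • Finsupp.single ([] : List C) 1 := by
  cases w with
  | nil =>
    rw [List.length_nil, Finset.sum_range_one, List.take_nil, List.drop_nil, antipodeW_nil,
      mulW_nil_left, counitW, if_pos rfl, one_smul]
  | cons a w' =>
    rw [counitW, if_neg (List.cons_ne_nil a w'), zero_smul]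
    have htake : (a :: w').take (w'.length + 1) = a :: w' := by
      rw [← List.length_cons (a := a) (as := w')]; exact List.take_length
    have hdropn : (a :: w').drop (w'.length + 1) = [] := by
      rw [← List.length_cons (a := a) (as := w')]; exact List.drop_length
    simp only [List.length_cons]
    rw [Finset.sum_range_succ, star (a :: w') w'.length (by simp), hdropn, htake]
    have e1 : ∀ j ∈ Finset.range (w'.length + 1),
        Finsupp.mapDomain (cb (a :: w') j (w'.length + 1) :: ·)
          (mulW (· + ·) (Chw (k := k) (a :: w') j) (Finsupp.single ([] : List C) 1)) =
        Finsupp.mapDomain (cb (a :: w') j (w'.length + 1) :: ·) (Chw (a :: w') j) := by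
      intro j _
      rw [mulW_nil_right]
    rw [Finset.sum_congr rfl e1, ← Ch_rec (a :: w') w'.length (by simp)]
    have e2 : antipodeW (k := k) ((· + ·) : C → C → C) 0 ((a :: w').take (w'.length + 1)) =
        ((-1 : k) ^ (w'.length + 1)) • Chw (a :: w') (w'.length + 1) :=
      antipode_take _ _ (by simp)
    rw [htake] at e2
    rw [e2, mulW_smul_left, mulW_nil_right]
    module

end Part4C

section Part4D
variable {k : Type*} [CommRing k] {C : Type*} [AddCommMonoid C]

lemma mapDomain_cons_append (c e : C) (f : List C →₀ k) :
    Finsupp.mapDomain (c :: ·) (Finsupp.mapDomain (· ++ [e]) f) =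
      Finsupp.mapDomain (· ++ [e]) (Finsupp.mapDomain (c :: ·) f) := by
  rw [← Finsupp.mapDomain_comp, ← Finsupp.mapDomain_comp]
  exact Finsupp.mapDomain_congr fun x _ => by simp

lemma qsh_comm_aux : ∀ n (x y : List C), x.length + y.length ≤ n →
    qsh (k := k) (· + ·) x y = qsh (· + ·) y x := by
  intro n
  induction n with
  | zero =>
    intro x y h
    have hx : x = [] := by cases x <;> simp_all
    have hy : y = [] := by cases y <;> simp_all
    subst hx; subst hy; rfl
  | succ n ih =>
    intro x y hlen
    match x, y with
    | [], y => rw [qsh_nil_left, qsh_nil_right]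
    | a :: x, [] => rw [qsh_nil_left, qsh_nil_right]
    | a :: x, b :: y =>
      have h1 : x.length + (b :: y).length ≤ n := by simp at hlen ⊢; omega
      have h2 : (a :: x).length + y.length ≤ n := by simp at hlen ⊢; omega
      have h3 : x.length + y.length ≤ n := by simp at hlen ⊢; omega
      rw [qsh_cons_cons, qsh_cons_cons, ih x (b :: y) h1, ih (a :: x) y h2, ih x y h3,
        add_comm b a]
      abel

lemma qsh_comm (x y : List C) : qsh (k := k) (· + ·) x y = qsh (· + ·) y x :=
  qsh_comm_aux (x.length + y.length) x y le_rfl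

lemma qsh_append_aux : ∀ n (u v : List C) (a b : C), u.length + v.length ≤ n →
    qsh (k := k) (· + ·) (u ++ [a]) (v ++ [b]) =
      Finsupp.mapDomain (· ++ [a]) (qsh (· + ·) u (v ++ [b])) +
        Finsupp.mapDomain (· ++ [b]) (qsh (· + ·) (u ++ [a]) v) +
        Finsupp.mapDomain (· ++ [a + b]) (qsh (· + ·) u v) := by
  intro n
  induction n with
  | zero =>
    intro u v a b h
    have hu : u = [] := by cases u <;> simp_all
    have hv : v = [] := by cases v <;> simp_all
    subst hu; subst hv
    simp only [List.nil_append]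
    rw [qsh_cons_cons]
    simp only [qsh_nil_left, qsh_nil_right, Finsupp.mapDomain_single, List.nil_append,
      List.singleton_append]
    abel
  | succ n ih =>
    intro u v a b hlen
    match u, v with
    | [], [] =>
      simp only [List.nil_append]
      rw [qsh_cons_cons]
      simp only [qsh_nil_left, qsh_nil_right, Finsupp.mapDomain_single, List.nil_append,
        List.singleton_append]
      abel
    | [], d :: v' =>
      have h1 : ([] : List C).length + v'.length ≤ n := by simp at hlen ⊢; omega
      have e1 := ih [] v' a b h1
      simp only [List.nil_append] at e1 ⊢
      rw [List.cons_append, qsh_cons_cons, e1, qsh_cons_cons (a := a) (b := d)]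
      simp only [qsh_nil_left, Finsupp.mapDomain_add, Finsupp.mapDomain_single,
        mapDomain_cons_append, List.cons_append]
      abel
    | c :: u', [] =>
      have h1 : u'.length + ([] : List C).length ≤ n := by simp at hlen ⊢; omega
      have e1 := ih u' [] a b h1
      simp only [List.nil_append] at e1 ⊢
      rw [List.cons_append, qsh_cons_cons, e1, qsh_cons_cons (a := c) (b := b)]
      simp only [qsh_nil_left, qsh_nil_right, Finsupp.mapDomain_add, Finsupp.mapDomain_single,
        mapDomain_cons_append, List.cons_append]
      abel
    | c :: u', d :: v' =>
      have h1 : u'.length + (d :: v').length ≤ n := by simp at hlen ⊢; omega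
      have h2 : (c :: u').length + v'.length ≤ n := by simp at hlen ⊢; omega
      have h3 : u'.length + v'.length ≤ n := by simp at hlen ⊢; omega
      have e1 := ih u' (d :: v') a b h1
      have e2 := ih (c :: u') v' a b h2
      have e3 := ih u' v' a b h3
      simp only [List.cons_append] at e1 e2 e3 ⊢
      rw [qsh_cons_cons, e1, e2, e3, qsh_cons_cons (a := c) (b := d),
        qsh_cons_cons (a := c) (b := d), qsh_cons_cons (a := c) (b := d)]
      simp only [Finsupp.mapDomain_add, mapDomain_cons_append]
      abel

lemma qsh_reverse_aux : ∀ n (x y : List C), x.length + y.length ≤ n →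
    Finsupp.mapDomain List.reverse (qsh (k := k) (· + ·) x y) =
      qsh (· + ·) x.reverse y.reverse := by
  intro n
  induction n with
  | zero =>
    intro x y h
    have hx : x = [] := by cases x <;> simp_all
    have hy : y = [] := by cases y <;> simp_all
    subst hx; subst hy
    rw [qsh_nil_left, Finsupp.mapDomain_single, List.reverse_nil, qsh_nil_left]
  | succ n ih =>
    intro x y hlen
    match x, y with
    | [], y =>
      rw [qsh_nil_left, Finsupp.mapDomain_single, List.reverse_nil, qsh_nil_left]
    | a :: x, [] =>
      rw [qsh_nil_right, Finsupp.mapDomain_single, List.reverse_nil, qsh_nil_right]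
    | a :: x, b :: y =>
      have h1 : x.length + (b :: y).length ≤ n := by simp at hlen ⊢; omega
      have h2 : (a :: x).length + y.length ≤ n := by simp at hlen ⊢; omega
      have h3 : x.length + y.length ≤ n := by simp at hlen ⊢; omega
      have hrc : ∀ (c : C) (f : List C →₀ k),
          Finsupp.mapDomain List.reverse (Finsupp.mapDomain (c :: ·) f) =
            Finsupp.mapDomain (· ++ [c]) (Finsupp.mapDomain List.reverse f) := by
        intro c f
        rw [← Finsupp.mapDomain_comp, ← Finsupp.mapDomain_comp]
        exact Finsupp.mapDomain_congr fun z _ => by simp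
      rw [qsh_cons_cons, Finsupp.mapDomain_add, Finsupp.mapDomain_add, hrc, hrc, hrc,
        ih x (b :: y) h1, ih (a :: x) y h2, ih x y h3, List.reverse_cons, List.reverse_cons,
        qsh_append_aux (x.reverse.length + y.reverse.length) x.reverse y.reverse a b le_rfl]

lemma qsh_reverse (x y : List C) :
    Finsupp.mapDomain List.reverse (qsh (k := k) (· + ·) x y) =
      qsh (· + ·) x.reverse y.reverse :=
  qsh_reverse_aux (x.length + y.length) x y le_rfl

lemma mulW_comm (f g : List C →₀ k) : mulW (· + ·) f g = mulW (· + ·) g f := by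
  rw [mulW, mulW, Finsupp.sum_comm]
  refine Finsupp.sum_congr fun y _ => ?_
  refine Finsupp.sum_congr fun x _ => ?_
  rw [mul_comm, qsh_comm]

lemma mulW_mapDomain_mapDomain (op : C → C → C) (h1 h2 : List C → List C)
    (f g : List C →₀ k) :
    mulW op (Finsupp.mapDomain h1 f) (Finsupp.mapDomain h2 g) =
      f.sum fun x cx => g.sum fun y cy => (cx * cy) • qsh op (h1 x) (h2 y) := by
  rw [mulW]
  rw [Finsupp.sum_mapDomain_index (fun x => by simp)
    (fun x b1 b2 => by
      rw [← Finsupp.sum_add]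
      exact Finsupp.sum_congr fun y _ => by rw [add_mul, add_smul])]
  refine Finsupp.sum_congr fun x _ => ?_
  rw [Finsupp.sum_mapDomain_index (fun y => by simp)
    (fun y b1 b2 => by rw [mul_add, add_smul])]

lemma mapDomain_reverse_mulW (f g : List C →₀ k) :
    Finsupp.mapDomain List.reverse (mulW (· + ·) f g) =
      mulW (· + ·) (Finsupp.mapDomain List.reverse f) (Finsupp.mapDomain List.reverse g) := by
  rw [mulW_mapDomain_mapDomain, mulW]
  rw [show Finsupp.mapDomain (α := List C) (M := k) List.reverse =
    ⇑(Finsupp.mapDomain.addMonoidHom List.reverse) from rfl, map_finsuppSum]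
  refine Finsupp.sum_congr fun x _ => ?_
  rw [map_finsuppSum]
  refine Finsupp.sum_congr fun y _ => ?_
  rw [Finsupp.mapDomain.addMonoidHom_apply, Finsupp.mapDomain_smul, qsh_reverse]

lemma foldr_add_reverse (s : List C) :
    (s.reverse).foldr (· + ·) (0 : C) = s.foldr (· + ·) 0 := by
  rw [← List.sum_eq_foldr, ← List.sum_eq_foldr, List.sum_reverse]

lemma blocksOf_append (K : List ℕ) : ∀ (l : ℕ) (t : List C), K.sum + l = t.length →
    blocksOf (· + ·) (0 : C) (K ++ [l]) t =
      blocksOf (· + ·) 0 K (t.take (t.length - l)) ++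
        [((t.drop (t.length - l)).foldr (· + ·) 0)] := by
  induction K with
  | nil =>
    intro l t h
    simp only [List.sum_nil, Nat.zero_add] at h
    have h0 : t.length - l = 0 := by omega
    have ht : t.take l = t := by rw [h]; exact List.take_length
    simp [blocksOf, h0, ht]
  | cons k0 K' ih =>
    intro l t h
    simp only [List.sum_cons] at h
    have h1 : K'.sum + l = (t.drop k0).length := by rw [List.length_drop]; omega
    have e1 : (t.take (t.length - l)).take k0 = t.take k0 := by
      rw [List.take_take, Nat.min_eq_left (by omega)]
    have e2 : (t.take (t.length - l)).drop k0 = (t.drop k0).take ((t.drop k0).length - l) := by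
      rw [List.drop_take, List.length_drop]
      congr 1
      omega
    have e3 : t.drop (t.length - l) = (t.drop k0).drop ((t.drop k0).length - l) := by
      rw [List.drop_drop, List.length_drop]
      congr 1
      omega
    rw [List.cons_append, blocksOf, blocksOf, ih l (t.drop k0) h1, List.cons_append, e1, e2, e3]

lemma blocksOf_reverse : ∀ (L : List ℕ) (u : List C), L.sum = u.length →
    (blocksOf (· + ·) (0 : C) L u).reverse = blocksOf (· + ·) 0 L.reverse u.reverse := by
  intro L
  induction L with
  | nil => intro u h; rw [blocksOf, List.reverse_nil, List.reverse_nil, blocksOf]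
  | cons l L' ih =>
    intro u h
    simp only [List.sum_cons] at h
    have h1 : L'.sum = (u.drop l).length := by rw [List.length_drop]; omega
    have h2 : L'.reverse.sum + l = u.reverse.length := by
      rw [List.sum_reverse, List.length_reverse]; omega
    rw [blocksOf, List.reverse_cons, ih (u.drop l) h1, List.reverse_cons,
      blocksOf_append L'.reverse l u.reverse h2]
    congr 2
    · congr 1
      rw [List.take_reverse, List.length_reverse, show u.length - (u.length - l) = l by omega]
    · rw [List.drop_reverse, List.length_reverse, show u.length - (u.length - l) = l by omega,
        foldr_add_reverse]

lemma SgF_reverse (u : List C) :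
    Finsupp.mapDomain List.reverse (SgF (k := k) (· + ·) 0 u) = SgF (· + ·) 0 u.reverse := by
  rw [SgF, SgF, List.length_reverse, mapDomain_fsum]
  simp only [Finsupp.mapDomain_single]
  refine Finset.sum_nbij' (fun L => L.reverse) (fun L => L.reverse) ?_ ?_ ?_ ?_ ?_
  · intro L hL
    obtain ⟨h1, h2⟩ := (mem_compsF _ L).1 hL
    exact (mem_compsF _ L.reverse).2 ⟨fun l hl => h1 l (List.mem_reverse.1 hl),
      by rw [List.sum_reverse]; exact h2⟩
  · intro L hL
    obtain ⟨h1, h2⟩ := (mem_compsF _ L).1 hL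
    exact (mem_compsF _ L.reverse).2 ⟨fun l hl => h1 l (List.mem_reverse.1 hl),
      by rw [List.sum_reverse]; exact h2⟩
  · intro L _; exact List.reverse_reverse L
  · intro L _; exact List.reverse_reverse L
  · intro L hL
    obtain ⟨h1, h2⟩ := (mem_compsF _ L).1 hL
    rw [blocksOf_reverse L u h2]

lemma antipodeW_reverse (v : List C) :
    Finsupp.mapDomain List.reverse (antipodeW (k := k) (· + ·) 0 v) =
      antipodeW (· + ·) 0 v.reverse := by
  rw [antipodeW_eq, antipodeW_eq, Finsupp.mapDomain_smul, SgF_reverse, List.length_reverse,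
    List.reverse_reverse]

lemma right_antipode (w : List C) :
    (∑ i ∈ Finset.range (w.length + 1),
      mulW (· + ·) (Finsupp.single (w.take i) 1)
        (antipodeW (k := k) (· + ·) 0 (w.drop i))) =
    counitW (k := k) w • Finsupp.single ([] : List C) 1 := by
  have step1 : ∀ i, mulW (· + ·) (Finsupp.single (w.take i) (1 : k))
      (antipodeW (· + ·) 0 (w.drop i)) =
      mulW (· + ·) (antipodeW (· + ·) 0 (w.drop i)) (Finsupp.single (w.take i) 1) :=
    fun i => mulW_comm _ _
  simp only [step1]
  rw [← Finset.sum_range_reflect]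
  have step2 : ∀ i ∈ Finset.range (w.length + 1),
      mulW (· + ·) (antipodeW (k := k) (· + ·) 0 (w.drop (w.length + 1 - 1 - i)))
        (Finsupp.single (w.take (w.length + 1 - 1 - i)) 1) =
      Finsupp.mapDomain List.reverse
        (mulW (· + ·) (antipodeW (· + ·) 0 (w.reverse.take i))
          (Finsupp.single (w.reverse.drop i) 1)) := by
    intro i hi
    rw [mapDomain_reverse_mulW, antipodeW_reverse, Finsupp.mapDomain_single,
      List.take_reverse, List.drop_reverse, List.reverse_reverse, List.reverse_reverse,
      show w.length + 1 - 1 - i = w.length - i by omega]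
  rw [Finset.sum_congr rfl step2, ← mapDomain_fsum]
  have step3 := left_antipode (k := k) w.reverse
  rw [List.length_reverse] at step3
  rw [step3, Finsupp.mapDomain_smul, Finsupp.mapDomain_single, List.reverse_nil]
  congr 1
  simp [counitW, List.reverse_eq_nil_iff]

end Part4D


section Part12
variable {k : Type*} [CommRing k] {C : Type*}

lemma triangle_sum {M : Type*} [AddCommMonoid M] (n : ℕ) (g : ℕ → ℕ → M) :
    ∑ a ∈ Finset.range (n + 1), ∑ b ∈ Finset.range (n - a + 1), g a (a + b) =
      ∑ v ∈ Finset.range (n + 1), ∑ u ∈ Finset.range (v + 1), g u v := by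
  rw [Finset.sum_sigma', Finset.sum_sigma']
  refine Finset.sum_nbij' (fun p => ⟨p.1 + p.2, p.1⟩) (fun p => ⟨p.2, p.1 - p.2⟩) ?_ ?_ ?_ ?_ ?_
  · rintro ⟨a, b⟩ h
    simp only [Finset.mem_sigma, Finset.mem_range] at h ⊢
    omega
  · rintro ⟨v, u⟩ h
    simp only [Finset.mem_sigma, Finset.mem_range] at h ⊢
    omega
  · rintro ⟨a, b⟩ h; simp
  · rintro ⟨v, u⟩ h
    simp only [Finset.mem_sigma, Finset.mem_range] at h
    have : u + (v - u) = v := by omega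
    simp [this]
  · rintro ⟨a, b⟩ h; rfl

lemma coassoc (x : List C) :
    ((deconc (k := k) x).sum fun p cp =>
        (deconc (k := k) p.1).sum fun q cq =>
          Finsupp.single (q.1, q.2, p.2) (cp * cq)) =
      ((deconc (k := k) x).sum fun p cp =>
        (deconc (k := k) p.2).sum fun q cq =>
          Finsupp.single (p.1, q.1, q.2) (cp * cq)) := by
  have e1 : ((deconc (k := k) x).sum fun p cp =>
      (deconc (k := k) p.1).sum fun q cq =>
        Finsupp.single (q.1, q.2, p.2) (cp * cq)) =
      ((deconc (k := k) x).sum fun p cp =>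
        cp • ((deconc (k := k) p.1).sum fun q cq =>
          cq • Finsupp.single (q.1, q.2, p.2) (1 : k))) := by
    refine Finsupp.sum_congr fun p _ => ?_
    rw [Finsupp.smul_sum]
    refine Finsupp.sum_congr fun q _ => ?_
    rw [Finsupp.smul_single, Finsupp.smul_single, smul_eq_mul, smul_eq_mul, mul_one]
  have e2 : ((deconc (k := k) x).sum fun p cp =>
      (deconc (k := k) p.2).sum fun q cq =>
        Finsupp.single (p.1, q.1, q.2) (cp * cq)) =
      ((deconc (k := k) x).sum fun p cp =>
        cp • ((deconc (k := k) p.2).sum fun q cq =>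
          cq • Finsupp.single (p.1, q.1, q.2) (1 : k))) := by
    refine Finsupp.sum_congr fun p _ => ?_
    rw [Finsupp.smul_sum]
    refine Finsupp.sum_congr fun q _ => ?_
    rw [Finsupp.smul_single, Finsupp.smul_single, smul_eq_mul, smul_eq_mul, mul_one]
  rw [e1, e2, deconc_sum, deconc_sum]
  have L : ∀ i ∈ Finset.range (x.length + 1),
      ((deconc (k := k) (x.take i)).sum fun q cq =>
        cq • Finsupp.single (q.1, q.2, x.drop i) (1 : k)) =
      ∑ b ∈ Finset.range (i + 1),
        Finsupp.single (x.take b, (x.take i).drop b, x.drop i) (1 : k) := by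
    intro i hi
    rw [deconc_sum (k := k) (x.take i) (fun q => Finsupp.single (q.1, q.2, x.drop i) (1 : k))]
    rw [Finset.mem_range] at hi
    rw [List.length_take, Nat.min_eq_left (by omega)]
    refine Finset.sum_congr rfl fun b hb => ?_
    rw [Finset.mem_range] at hb
    rw [List.take_take, Nat.min_eq_left (by omega)]
  have R : ∀ i ∈ Finset.range (x.length + 1),
      ((deconc (k := k) (x.drop i)).sum fun q cq =>
        cq • Finsupp.single (x.take i, q.1, q.2) (1 : k)) =
      ∑ b ∈ Finset.range (x.length - i + 1),
        Finsupp.single (x.take i, (x.take (i + b)).drop i, x.drop (i + b)) (1 : k) := by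
    intro i hi
    rw [deconc_sum (k := k) (x.drop i) (fun q => Finsupp.single (x.take i, q.1, q.2) (1 : k))]
    rw [Finset.mem_range] at hi
    rw [List.length_drop]
    refine Finset.sum_congr rfl fun b hb => ?_
    rw [List.take_drop, List.drop_drop]
  rw [Finset.sum_congr rfl L, Finset.sum_congr rfl R]
  rw [triangle_sum x.length
    (fun u v => Finsupp.single (x.take u, (x.take v).drop u, x.drop v) (1 : k))]

lemma counit_laws (x : List C) :
    ((deconc (k := k) x).sum fun p cp =>
        (cp * counitW (k := k) p.1) • Finsupp.single p.2 (1 : k)) = Finsupp.single x 1 ∧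
      ((deconc (k := k) x).sum fun p cp =>
        (cp * counitW (k := k) p.2) • Finsupp.single p.1 (1 : k)) = Finsupp.single x 1 := by
  constructor
  · have e : ((deconc (k := k) x).sum fun p cp =>
        (cp * counitW (k := k) p.1) • Finsupp.single p.2 (1 : k)) =
        ((deconc (k := k) x).sum fun p cp =>
          cp • (counitW (k := k) p.1 • Finsupp.single p.2 (1 : k))) := by
      refine Finsupp.sum_congr fun p _ => ?_
      rw [mul_smul]
    rw [e, deconc_sum]
    rw [Finset.sum_eq_single_of_mem 0 (Finset.mem_range.2 (by omega))]
    · simp [counitW]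
    · intro i hi hne
      rw [Finset.mem_range] at hi
      have : x.take i ≠ [] := by
        intro h
        rcases List.take_eq_nil_iff.1 h with h' | h'
        · exact hne h'
        · subst h'; simp at hi; omega
      simp [counitW, this]
  · have e : ((deconc (k := k) x).sum fun p cp =>
        (cp * counitW (k := k) p.2) • Finsupp.single p.1 (1 : k)) =
        ((deconc (k := k) x).sum fun p cp =>
          cp • (counitW (k := k) p.2 • Finsupp.single p.1 (1 : k))) := by
      refine Finsupp.sum_congr fun p _ => ?_
      rw [mul_smul]
    rw [e, deconc_sum]
    rw [Finset.sum_eq_single_of_mem x.length (Finset.mem_range.2 (by omega))]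
    · simp [counitW]
    · intro i hi hne
      rw [Finset.mem_range] at hi
      have : x.drop i ≠ [] := by
        intro h
        have := List.drop_eq_nil_iff.1 h
        omega
      simp [counitW, this]

end Part12

/-- for a commutative additively finite monoid `E` with
`E \ {0}` a subsemigroup, the algebra `EQSym[m]` of multi-quasisymmetric
functions with exponents in `E` (the free module on multi-compositions over
`[m]^E`, with the quasi-shuffle product) is a Hopf algebra, with coproduct the
deconcatenation `Δ`, counit `ε(M_w) = δ_{w,∅}` and antipode
`S(M_w) = (−1)^{ℓ(w)} ∑_{L ⊨ ℓ(w)} M_{L∘w^r}`:  `Δ` is coassociative with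
counit `ε`, `Δ` and `ε` are multiplicative, and `S` satisfies the antipode
identities. -/
theorem stmt12 (k : Type*) [CommRing k] {E : Type*} [AddCommMonoid E] (m : ℕ)
    (hfin : ∀ e : E, {p : E × E | p.1 + p.2 = e}.Finite)
    (hsub : ∀ a b : E, a ≠ 0 → b ≠ 0 → a + b ≠ 0) :
    -- coassociativity
    (∀ x : List (Fin m → E), (∀ c ∈ x, c ≠ 0) →
      ((deconc (k := k) x).sum fun p cp =>
          (deconc (k := k) p.1).sum fun q cq =>
            Finsupp.single (q.1, q.2, p.2) (cp * cq)) =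
        ((deconc (k := k) x).sum fun p cp =>
          (deconc (k := k) p.2).sum fun q cq =>
            Finsupp.single (p.1, q.1, q.2) (cp * cq))) ∧
    -- counit laws
    (∀ x : List (Fin m → E), (∀ c ∈ x, c ≠ 0) →
      ((deconc (k := k) x).sum fun p cp =>
          (cp * counitW (k := k) p.1) • Finsupp.single p.2 (1 : k)) = Finsupp.single x 1 ∧
        ((deconc (k := k) x).sum fun p cp =>
          (cp * counitW (k := k) p.2) • Finsupp.single p.1 (1 : k)) = Finsupp.single x 1) ∧
    -- Δ and ε are algebra morphisms
    (∀ x y : List (Fin m → E), (∀ c ∈ x, c ≠ 0) → (∀ c ∈ y, c ≠ 0) →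
      ((qsh (k := k) (· + ·) x y).sum fun z cz => cz • deconc (k := k) z) =
          mulPair (· + ·) (deconc (k := k) x) (deconc (k := k) y) ∧
        ((qsh (k := k) (· + ·) x y).sum fun z cz => cz * counitW (k := k) z) =
          counitW (k := k) x * counitW (k := k) y) ∧
    -- antipode identities
    (∀ x : List (Fin m → E), (∀ c ∈ x, c ≠ 0) →
      ((deconc (k := k) x).sum fun p cp =>
          cp • mulW (· + ·) (antipodeW (k := k) (· + ·) 0 p.1) (Finsupp.single p.2 (1 : k))) =
          counitW (k := k) x • Finsupp.single ([] : List (Fin m → E)) (1 : k) ∧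
        ((deconc (k := k) x).sum fun p cp =>
          cp • mulW (· + ·) (Finsupp.single p.1 (1 : k)) (antipodeW (k := k) (· + ·) 0 p.2)) =
          counitW (k := k) x • Finsupp.single ([] : List (Fin m → E)) (1 : k)) := by
  refine ⟨fun x _ => coassoc x, fun x _ => counit_laws x,
    fun x y _ _ => part3 (· + ·) x y, fun x _ => ⟨?_, ?_⟩⟩
  · rw [deconc_sum]
    exact left_antipode x
  · rw [deconc_sum]
    exact right_antipode x
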